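/- Let n ≥ 2 and β = n/(n-1). Suppose (Ω, μ) is a probability space and u : Ω → ℝ satisfies, for every p ≥ 2, max{||u||_{L^{pβ}}, 1} ≤ (C·p)^{1/p} · max{||u||_{L^p}, 1} for a fixed constant C ≥ 1. Then u ∈ L^∞ and there is a constant C₆ depending only on C and β with ||u||_{L^∞} ≤ C₆ · max{||u||_{L²}, 1}. -/

import Mathlib

open MeasureTheory Finset
open scoped ENNReal NNReal

lemma my_geom_sum_le {r : ℝ} (h0 : 0 ≤ r) (h1 : r < 1) (k : ℕ) :
    ∑ j ∈ range k, r ^ j ≤ (1 - r)⁻¹ := by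
  have hr : r ≠ 1 := ne_of_lt h1
  have hrk : 0 ≤ r ^ k := pow_nonneg h0 k
  have h2 : (0:ℝ) < 1 - r := by linarith
  rw [geom_sum_eq hr]
  have h3 : (r ^ k - 1) / (r - 1) = (1 - r ^ k) / (1 - r) := by
    rw [div_eq_div_iff (by linarith) (by linarith)]; ring
  rw [h3, div_le_iff₀ h2, inv_mul_cancel₀ (ne_of_gt h2)]
  linarith

lemma my_log_le_two_sqrt {x : ℝ} (hx : 0 < x) : Real.log x ≤ 2 * Real.sqrt x := by
  have h1 : Real.log (Real.sqrt x) = Real.log x / 2 := Real.log_sqrt hx.le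
  have h2 : Real.log (Real.sqrt x) ≤ Real.sqrt x - 1 :=
    Real.log_le_sub_one_of_pos (Real.sqrt_pos.mpr hx)
  nlinarith [Real.sqrt_nonneg x]

lemma my_prod_bound {C β : ℝ} (hC : 1 ≤ C) (hβ : 1 < β) (k : ℕ) :
    ∏ j ∈ range k, (C * (2 * β ^ j)) ^ (1 / (2 * β ^ j)) ≤
      Real.exp (2 * Real.sqrt C * (1 - (Real.sqrt β)⁻¹)⁻¹) := by
  have hβ0 : (0:ℝ) < β := by linarith
  have hp : ∀ j : ℕ, (0:ℝ) < 2 * β ^ j := fun j => by positivity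
  have hCp : ∀ j : ℕ, (0:ℝ) < C * (2 * β ^ j) := fun j => by positivity
  have hsb : 1 < Real.sqrt β := by
    rw [show (1:ℝ) = Real.sqrt 1 by simp]; exact Real.sqrt_lt_sqrt (by norm_num) hβ
  set r : ℝ := (Real.sqrt β)⁻¹ with hr
  have hr0 : 0 ≤ r := by positivity
  have hr1 : r < 1 := by rw [hr]; exact inv_lt_one_of_one_lt₀ hsb
  -- rewrite product as exp of sum
  have hfac : ∀ j : ℕ, (C * (2 * β ^ j)) ^ (1 / (2 * β ^ j))
      = Real.exp (Real.log (C * (2 * β ^ j)) * (1 / (2 * β ^ j))) := fun j => by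
    rw [Real.rpow_def_of_pos (hCp j)]
  calc ∏ j ∈ range k, (C * (2 * β ^ j)) ^ (1 / (2 * β ^ j))
      = Real.exp (∑ j ∈ range k, Real.log (C * (2 * β ^ j)) * (1 / (2 * β ^ j))) := by
        rw [Real.exp_sum]; exact Finset.prod_congr rfl fun j _ => hfac j
    _ ≤ Real.exp (2 * Real.sqrt C * (1 - r)⁻¹) := by
        apply Real.exp_le_exp.mpr
        calc ∑ j ∈ range k, Real.log (C * (2 * β ^ j)) * (1 / (2 * β ^ j))
            ≤ ∑ j ∈ range k, 2 * Real.sqrt C * r ^ j := by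
              apply Finset.sum_le_sum
              intro j _
              have hpj := hp j
              have hlog : Real.log (C * (2 * β ^ j)) ≤ 2 * Real.sqrt (C * (2 * β ^ j)) :=
                my_log_le_two_sqrt (hCp j)
              have hsq : Real.sqrt (C * (2 * β ^ j)) = Real.sqrt C * Real.sqrt (2 * β ^ j) :=
                Real.sqrt_mul (by linarith) _
              have hss : Real.sqrt (2 * β ^ j) * Real.sqrt (2 * β ^ j) = 2 * β ^ j :=
                Real.mul_self_sqrt hpj.le
              have hsp : (Real.sqrt β) ^ j ≤ Real.sqrt (2 * β ^ j) := by
                have h2 : ((Real.sqrt β) ^ j) ^ 2 = β ^ j := by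
                  rw [← pow_mul, mul_comm j 2, pow_mul, sq]
                  rw [Real.mul_self_sqrt hβ0.le]
                exact (Real.le_sqrt' (by positivity)).mpr
                  (by rw [h2]; nlinarith [pow_pos hβ0 j])
              have hsppos : (0:ℝ) < (Real.sqrt β) ^ j := pow_pos (by linarith) j
              have hspos : (0:ℝ) < Real.sqrt (2 * β ^ j) := lt_of_lt_of_le hsppos hsp
              have key : Real.sqrt (2 * β ^ j) * (1 / (2 * β ^ j)) ≤ r ^ j := by
                have h1 : Real.sqrt (2 * β ^ j) * (1 / (2 * β ^ j)) = 1 / Real.sqrt (2 * β ^ j) := by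
                  rw [← hss]; field_simp; rw [Real.sqrt_sq hspos.le]
                rw [h1, hr, inv_pow, ← one_div]
                exact one_div_le_one_div_of_le hsppos hsp
              calc Real.log (C * (2 * β ^ j)) * (1 / (2 * β ^ j))
                  ≤ 2 * Real.sqrt (C * (2 * β ^ j)) * (1 / (2 * β ^ j)) := by
                    apply mul_le_mul_of_nonneg_right hlog (by positivity)
                _ = 2 * Real.sqrt C * (Real.sqrt (2 * β ^ j) * (1 / (2 * β ^ j))) := by
                    rw [hsq]; ring
                _ ≤ 2 * Real.sqrt C * r ^ j := by
                    apply mul_le_mul_of_nonneg_left key (by positivity)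
          _ = 2 * Real.sqrt C * ∑ j ∈ range k, r ^ j := by rw [Finset.mul_sum]
          _ ≤ 2 * Real.sqrt C * (1 - r)⁻¹ := by
              apply mul_le_mul_of_nonneg_left (my_geom_sum_le hr0 hr1 k) (by positivity)

theorem moser_iteration_Linfty_bound (n : ℕ) (hn : 2 ≤ n) (C : ℝ) (hC : 1 ≤ C)
    (β : ℝ) (hβ : β = (n : ℝ) / (n - 1)) :
    ∃ C₆ : ℝ, 0 < C₆ ∧
      ∀ (Ω : Type) (_ : MeasurableSpace Ω) (μ : Measure Ω), IsProbabilityMeasure μ →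
        ∀ u : Ω → ℝ, MemLp u 2 μ →
          (∀ p : ℝ, 2 ≤ p →
            max (eLpNorm u (ENNReal.ofReal (p * β)) μ) 1 ≤
              ENNReal.ofReal ((C * p) ^ (1 / p)) * max (eLpNorm u (ENNReal.ofReal p) μ) 1) →
          MemLp u ⊤ μ ∧
            eLpNorm u ⊤ μ ≤ ENNReal.ofReal C₆ * max (eLpNorm u 2 μ) 1 := by
  have hn2 : (2:ℝ) ≤ (n:ℝ) := by exact_mod_cast hn
  have hβ1 : 1 < β := by
    rw [hβ, lt_div_iff₀ (by linarith)]; linarith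
  refine ⟨Real.exp (2 * Real.sqrt C * (1 - (Real.sqrt β)⁻¹)⁻¹), Real.exp_pos _, ?_⟩
  set C₆ : ℝ := Real.exp (2 * Real.sqrt C * (1 - (Real.sqrt β)⁻¹)⁻¹) with hC₆
  intro Ω mΩ μ hμ u hu2 hiter
  set p : ℕ → ℝ := fun k => 2 * β ^ k with hpdef
  have hp2 : ∀ k, 2 ≤ p k := by
    intro k
    have : (1:ℝ) ≤ β ^ k := one_le_pow₀ hβ1.le
    simp only [hpdef]; nlinarith
  have hppos : ∀ k, 0 < p k := fun k => lt_of_lt_of_le two_pos (hp2 k)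
  set M : ℝ≥0∞ := ENNReal.ofReal C₆ * max (eLpNorm u 2 μ) 1 with hM
  have hM_ne_top : M ≠ ∞ := by
    apply ENNReal.mul_ne_top ENNReal.ofReal_ne_top
    exact (max_lt hu2.2 ENNReal.one_lt_top).ne
  -- the iteration
  have key : ∀ k, max (eLpNorm u (ENNReal.ofReal (p k)) μ) 1 ≤
      ENNReal.ofReal (∏ j ∈ Finset.range k, (C * p j) ^ (1 / p j)) * max (eLpNorm u 2 μ) 1 := by
    intro k
    induction k with
    | zero =>
      simp only [hpdef, pow_zero, mul_one, Finset.range_zero, Finset.prod_empty,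
        ENNReal.ofReal_one, one_mul]
      rw [show ENNReal.ofReal 2 = (2:ℝ≥0∞) by norm_num]
    | succ k ih =>
      have h1 := hiter (p k) (hp2 k)
      have hpe : p k * β = p (k+1) := by simp only [hpdef]; ring
      rw [hpe] at h1
      have hak : (0:ℝ) ≤ (C * p k) ^ (1 / p k) := Real.rpow_nonneg (by nlinarith [hppos k]) _
      calc max (eLpNorm u (ENNReal.ofReal (p (k+1))) μ) 1
          ≤ ENNReal.ofReal ((C * p k) ^ (1 / p k)) * max (eLpNorm u (ENNReal.ofReal (p k)) μ) 1 := h1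
        _ ≤ ENNReal.ofReal ((C * p k) ^ (1 / p k)) *
              (ENNReal.ofReal (∏ j ∈ Finset.range k, (C * p j) ^ (1 / p j)) * max (eLpNorm u 2 μ) 1) :=
            mul_le_mul_right ih _
        _ = ENNReal.ofReal (∏ j ∈ Finset.range (k+1), (C * p j) ^ (1 / p j)) * max (eLpNorm u 2 μ) 1 := by
            rw [← mul_assoc, ← ENNReal.ofReal_mul hak, Finset.prod_range_succ,
              mul_comm ((C * p k) ^ (1 / p k)) (∏ j ∈ Finset.range k, (C * p j) ^ (1 / p j))]
  have bound : ∀ k, eLpNorm u (ENNReal.ofReal (p k)) μ ≤ M := by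
    intro k
    refine le_trans (le_max_left _ _) ((key k).trans ?_)
    apply mul_le_mul_left
    exact ENNReal.ofReal_le_ofReal (my_prod_bound hC hβ1 k)
  -- tendsto of exponents
  have hptop : Filter.Tendsto p Filter.atTop Filter.atTop := by
    have := tendsto_pow_atTop_atTop_of_one_lt hβ1
    exact Filter.Tendsto.const_mul_atTop two_pos this
  -- essSup bound
  have htop : eLpNorm u ⊤ μ ≤ M := by
    rw [eLpNorm_exponent_top]
    apply ENNReal.le_of_forall_pos_le_add
    intro δ hδ _
    set ε : ℝ≥0∞ := M + δ with hε
    have hδ0 : (δ : ℝ≥0∞) ≠ 0 := by exact_mod_cast hδ.ne'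
    have hMε : M < ε := ENNReal.lt_add_right hM_ne_top hδ0
    have hε0 : ε ≠ 0 := fun h => hδ0 (by simpa using (add_eq_zero.mp h).2)
    have hε_top : ε ≠ ∞ := by
      rw [hε]; exact ENNReal.add_ne_top.mpr ⟨hM_ne_top, ENNReal.coe_ne_top⟩
    set x : ℝ≥0∞ := M / ε with hx
    have hx1 : x < 1 := ENNReal.div_lt_of_lt_mul (by simpa using hMε)
    have hx_top : x ≠ ∞ := (lt_of_lt_of_le hx1 le_top).ne
    have hd : ∀ k, μ {y | ε ≤ (‖u y‖₊ : ℝ≥0∞)} ≤ x ^ (p k) := by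
      intro k
      have hne0 : ENNReal.ofReal (p k) ≠ 0 := by
        simp [ENNReal.ofReal_eq_zero, not_le, hppos k]
      have hcheb := mul_meas_ge_le_pow_eLpNorm' μ hne0 ENNReal.ofReal_ne_top hu2.1 ε
      rw [ENNReal.toReal_ofReal (hppos k).le] at hcheb
      have h2 : ε ^ (p k) * μ {y | ε ≤ (‖u y‖₊ : ℝ≥0∞)} ≤ M ^ (p k) :=
        hcheb.trans (ENNReal.rpow_le_rpow (bound k) (hppos k).le)
      have hεp0 : ε ^ (p k) ≠ 0 := by
        simp [ENNReal.rpow_eq_zero_iff, hε0, hε_top, (hppos k).ne', not_lt, (hppos k).le]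
      have hεptop : ε ^ (p k) ≠ ∞ := by
        simp [ENNReal.rpow_eq_top_iff, hε0, hε_top, not_lt, (hppos k).le, (hppos k).ne']
      rw [hx, ENNReal.div_rpow_of_nonneg _ _ (hppos k).le]
      rw [ENNReal.le_div_iff_mul_le (Or.inl hεp0) (Or.inl hεptop), mul_comm]
      exact h2
    have hd0 : μ {y | ε ≤ (‖u y‖₊ : ℝ≥0∞)} = 0 := by
      rcases eq_or_ne x 0 with hx0 | hx0
      · have := hd 0
        rwa [hx0, ENNReal.zero_rpow_of_pos (hppos 0), le_zero_iff] at this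
      · -- x ∈ (0,1), x^{p k} → 0
        have hxr1 : x.toReal < 1 := by
          rw [← ENNReal.toReal_one]
          exact ENNReal.toReal_lt_toReal hx_top ENNReal.one_ne_top |>.mpr hx1
        have hxr0 : 0 < x.toReal := ENNReal.toReal_pos hx0 hx_top
        have htends : Filter.Tendsto (fun k => x ^ (p k)) Filter.atTop (nhds 0) := by
          have h1 : Filter.Tendsto (fun q : ℝ => x.toReal ^ q) Filter.atTop (nhds 0) :=
            tendsto_rpow_atTop_of_base_lt_one _ (by linarith) hxr1
          have h2 : Filter.Tendsto (fun k => x.toReal ^ (p k)) Filter.atTop (nhds 0) :=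
            h1.comp hptop
          have h3 := (ENNReal.continuous_ofReal.tendsto 0).comp h2
          rw [ENNReal.ofReal_zero] at h3
          exact h3.congr fun k => by
            rw [Function.comp_apply, ← ENNReal.ofReal_rpow_of_pos hxr0,
              ENNReal.ofReal_toReal hx_top]
        exact le_antisymm (ge_of_tendsto' htends hd) zero_le
    have hae : ∀ᵐ y ∂μ, (‖u y‖₊ : ℝ≥0∞) ≤ ε := by
      rw [ae_iff]
      refine measure_mono_null ?_ hd0
      intro y hy
      simp only [Set.mem_setOf_eq, not_le] at hy ⊢
      exact hy.le
    exact essSup_le_of_ae_le ε hae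
  refine ⟨⟨hu2.1, lt_of_le_of_lt htop (lt_of_le_of_ne le_top hM_ne_top)⟩, htop⟩
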